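/- Let n ≥ 1. There exists a triple (A, B, C) of homogeneous polynomials of degree n in ℝ[x,y], not all zero, satisfying A·x^{2n+1} + B·(x+y)^{2n+1} + C·y^{2n+1} = 0; and the space of triples (D, E, F) of homogeneous polynomials of degree n+1 satisfying D·x^{2n+1} + E·(x+y)^{2n+1} + F·y^{2n+1} = 0 has dimension at least 2. -/

import Mathlib

set_option synthInstance.maxHeartbeats 800000
set_option maxHeartbeats 1000000


open MvPolynomial

/-- The `ℝ`-linear map sending a triple `(A, B, C)` of polynomials to
`A·g₁ + B·g₂ + C·g₃`; its kernel is the syzygy module of `(g₁, g₂, g₃)`. -/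
noncomputable def syzMap (g₁ g₂ g₃ : MvPolynomial (Fin 2) ℝ) :
    (MvPolynomial (Fin 2) ℝ × MvPolynomial (Fin 2) ℝ × MvPolynomial (Fin 2) ℝ) →ₗ[ℝ]
      MvPolynomial (Fin 2) ℝ where
  toFun p := p.1 * g₁ + p.2.1 * g₂ + p.2.2 * g₃
  map_add' p q := by
    simp only [Prod.fst_add, Prod.snd_add]
    ring
  map_smul' c p := by
    simp only [Prod.smul_fst, Prod.smul_snd, MvPolynomial.smul_eq_C_mul, RingHom.id_apply]
    ring

open Finsupp


lemma degree_two_eq (d : Fin 2 →₀ ℕ) : d.degree = d 0 + d 1 := by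
  rw [Finsupp.degree_apply]
  rw [Finset.sum_subset (Finset.subset_univ d.support)
    (fun i _ hi => Finsupp.notMem_support_iff.mp hi), Fin.sum_univ_two]

/-- Degree-`k` exponent vectors on two variables correspond to `Fin (k+1)`. -/
noncomputable def degEquiv (k : ℕ) : {d : Fin 2 →₀ ℕ | d.degree = k} ≃ Fin (k + 1) where
  toFun d := ⟨d.1 0, by
    have h : d.1.degree = k := d.2
    rw [degree_two_eq] at h; omega⟩
  invFun i := ⟨Finsupp.single 0 (i : ℕ) + Finsupp.single 1 (k - (i : ℕ)), by
    have := i.2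
    simp only [Set.mem_setOf_eq, degree_two_eq, Finsupp.add_apply, Finsupp.single_apply]
    simp; omega⟩
  left_inv := by
    rintro ⟨d, hd⟩
    have h01 : d 0 + d 1 = k := by rw [← degree_two_eq]; exact hd
    ext i
    fin_cases i <;> simp <;> omega
  right_inv i := by
    ext
    simp

noncomputable def homEquiv (k : ℕ) :
    ↥(homogeneousSubmodule (Fin 2) ℝ k) ≃ₗ[ℝ] (Fin (k + 1) →₀ ℝ) :=
  (LinearEquiv.ofEq _ _ (homogeneousSubmodule_eq_finsupp_supported (Fin 2) ℝ k)).trans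
    ((AddMonoidAlgebra.supportedEquivFinsupp _).trans (Finsupp.domLCongr (degEquiv k)))

instance homFD (k : ℕ) : FiniteDimensional ℝ ↥(homogeneousSubmodule (Fin 2) ℝ k) :=
  Module.Finite.equiv (homEquiv k).symm

lemma finrank_hom (k : ℕ) :
    Module.finrank ℝ ↥(homogeneousSubmodule (Fin 2) ℝ k) = k + 1 := by
  rw [LinearEquiv.finrank_eq (homEquiv k)]
  simp [Module.finrank_finsupp_self]

section
variable {M N : Type*} [AddCommGroup M] [AddCommGroup N] [Module ℝ M] [Module ℝ N]

noncomputable def infKerEquiv (S : Submodule ℝ M) (f : M →ₗ[ℝ] N) :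
    ↥(S ⊓ LinearMap.ker f) ≃ₗ[ℝ] ↥(LinearMap.ker (f.domRestrict S)) := by
  have h : LinearMap.ker (f.domRestrict S) = Submodule.comap S.subtype (S ⊓ LinearMap.ker f) := by
    ext x
    simp [LinearMap.mem_ker, LinearMap.domRestrict_apply, x.2]
  exact (Submodule.comapSubtypeEquivOfLe (inf_le_left :
    S ⊓ LinearMap.ker f ≤ S)).symm.trans (LinearEquiv.ofEq _ _ h.symm)
end

section
variable {R M N : Type*} [CommRing R] [AddCommGroup M] [AddCommGroup N] [Module R M] [Module R N]

/-- `p.prod q` is linearly equivalent to `p × q`. -/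
def prodSubEquiv (p : Submodule R M) (q : Submodule R N) : ↥(p.prod q) ≃ₗ[R] ↥p × ↥q where
  toFun x := (⟨x.1.1, x.2.1⟩, ⟨x.1.2, x.2.2⟩)
  invFun x := ⟨(x.1.1, x.2.1), ⟨x.1.2, x.2.2⟩⟩
  map_add' x y := rfl
  map_smul' c x := rfl
  left_inv x := rfl
  right_inv x := rfl
end

noncomputable abbrev Hsub (k : ℕ) : Submodule ℝ (MvPolynomial (Fin 2) ℝ) := homogeneousSubmodule (Fin 2) ℝ k

noncomputable def tripleEquiv (k : ℕ) :
    ↥((Hsub k).prod ((Hsub k).prod (Hsub k))) ≃ₗ[ℝ] ↥(Hsub k) × ↥(Hsub k) × ↥(Hsub k) :=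
  (prodSubEquiv _ _).trans (LinearEquiv.prodCongr (LinearEquiv.refl ℝ _) (prodSubEquiv _ _))

instance tripleFD (k : ℕ) : FiniteDimensional ℝ ↥((Hsub k).prod ((Hsub k).prod (Hsub k))) :=
  Module.Finite.equiv (tripleEquiv k).symm

lemma finrank_triple (k : ℕ) :
    Module.finrank ℝ ↥((Hsub k).prod ((Hsub k).prod (Hsub k))) = 3 * (k + 1) := by
  rw [LinearEquiv.finrank_eq (tripleEquiv k)]
  simp [Module.finrank_prod, finrank_hom]
  ring

lemma ker_finrank_ge (k m : ℕ) (g₁ g₂ g₃ : MvPolynomial (Fin 2) ℝ)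
    (h₁ : g₁.IsHomogeneous m) (h₂ : g₂.IsHomogeneous m) (h₃ : g₃.IsHomogeneous m) :
    3 * (k + 1) ≤ (k + m + 1) +
      Module.finrank ℝ ↥(((Hsub k).prod ((Hsub k).prod (Hsub k))) ⊓
        LinearMap.ker (syzMap g₁ g₂ g₃)) := by
  set S := (Hsub k).prod ((Hsub k).prod (Hsub k)) with hS
  set f := syzMap g₁ g₂ g₃ with hf
  have hmem : ∀ x : ↥S, (f.domRestrict S) x ∈ Hsub (k + m) := by
    rintro ⟨⟨A, B, C⟩, hABC⟩
    obtain ⟨hA, hB, hC⟩ := hABC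
    exact Submodule.add_mem _ (Submodule.add_mem _ (hA.mul h₁) (hB.mul h₂)) (hC.mul h₃)
  set L : ↥S →ₗ[ℝ] ↥(Hsub (k + m)) := (f.domRestrict S).codRestrict _ hmem with hL
  have hker : LinearMap.ker L = LinearMap.ker (f.domRestrict S) :=
    LinearMap.ker_codRestrict _ _ hmem
  have hrn := LinearMap.finrank_range_add_finrank_ker L
  have hrange : Module.finrank ℝ ↥(LinearMap.range L) ≤ k + m + 1 := by
    rw [← finrank_hom (k + m)]
    exact Submodule.finrank_le _
  have heq : Module.finrank ℝ ↥(S ⊓ LinearMap.ker f)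
      = Module.finrank ℝ ↥(LinearMap.ker L) := by
    rw [hker]
    exact LinearEquiv.finrank_eq (infKerEquiv S f)
  rw [finrank_triple k] at hrn
  omega

/-- For `n ≥ 1` there is a nonzero triple `(A, B, C)` of homogeneous
polynomials of degree `n` in `ℝ[x,y]` with
`A·x^(2n+1) + B·(x+y)^(2n+1) + C·y^(2n+1) = 0`, and the space of triples `(D, E, F)`
of homogeneous polynomials of degree `n+1` with
`D·x^(2n+1) + E·(x+y)^(2n+1) + F·y^(2n+1) = 0` has dimension at least `2`. -/
theorem syzygy_space_odd (n : ℕ) (hn : 1 ≤ n) :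
    (∃ A B C : MvPolynomial (Fin 2) ℝ,
        (A, B, C) ≠ (0, 0, 0) ∧
        A.IsHomogeneous n ∧ B.IsHomogeneous n ∧ C.IsHomogeneous n ∧
        A * X 0 ^ (2 * n + 1) + B * (X 0 + X 1) ^ (2 * n + 1) +
          C * X 1 ^ (2 * n + 1) = 0) ∧
      2 ≤ Module.rank ℝ
        ↥(((homogeneousSubmodule (Fin 2) ℝ (n + 1)).prod
              ((homogeneousSubmodule (Fin 2) ℝ (n + 1)).prod
                (homogeneousSubmodule (Fin 2) ℝ (n + 1)))) ⊓
            LinearMap.ker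
              (syzMap (X 0 ^ (2 * n + 1)) ((X 0 + X 1) ^ (2 * n + 1))
                (X 1 ^ (2 * n + 1)))) := by
  have hg₁ : (X 0 ^ (2 * n + 1) : MvPolynomial (Fin 2) ℝ).IsHomogeneous (2 * n + 1) := by
    simpa using (isHomogeneous_X ℝ (0 : Fin 2)).pow (2 * n + 1)
  have hg₂ : ((X 0 + X 1) ^ (2 * n + 1) : MvPolynomial (Fin 2) ℝ).IsHomogeneous (2 * n + 1) := by
    simpa using ((isHomogeneous_X ℝ (0 : Fin 2)).add (isHomogeneous_X ℝ 1)).pow (2 * n + 1)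
  have hg₃ : (X 1 ^ (2 * n + 1) : MvPolynomial (Fin 2) ℝ).IsHomogeneous (2 * n + 1) := by
    simpa using (isHomogeneous_X ℝ (1 : Fin 2)).pow (2 * n + 1)
  constructor
  · have h := ker_finrank_ge n (2 * n + 1) _ _ _ hg₁ hg₂ hg₃
    have hpos : 0 < Module.finrank ℝ
        ↥(((Hsub n).prod ((Hsub n).prod (Hsub n))) ⊓
          LinearMap.ker (syzMap (X 0 ^ (2 * n + 1)) ((X 0 + X 1) ^ (2 * n + 1))
            (X 1 ^ (2 * n + 1)))) := by omega
    have hne : (((Hsub n).prod ((Hsub n).prod (Hsub n))) ⊓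
        LinearMap.ker (syzMap (X 0 ^ (2 * n + 1)) ((X 0 + X 1) ^ (2 * n + 1))
            (X 1 ^ (2 * n + 1)))) ≠ ⊥ := by
      intro hbot
      rw [hbot] at hpos
      simp at hpos
    obtain ⟨⟨A, B, C⟩, hmem, hne0⟩ := Submodule.ne_bot_iff _ |>.mp hne
    obtain ⟨hS, hker⟩ := hmem
    obtain ⟨hA, hB, hC⟩ := hS
    refine ⟨A, B, C, ?_, hA, hB, hC, ?_⟩
    · exact fun h => hne0 (by simpa using h)
    · simpa [syzMap] using hker
  · have h := ker_finrank_ge (n + 1) (2 * n + 1) _ _ _ hg₁ hg₂ hg₃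
    have h3 : 2 ≤ Module.finrank ℝ
        ↥(((Hsub (n + 1)).prod ((Hsub (n + 1)).prod (Hsub (n + 1)))) ⊓
          LinearMap.ker (syzMap (X 0 ^ (2 * n + 1)) ((X 0 + X 1) ^ (2 * n + 1))
            (X 1 ^ (2 * n + 1)))) := by omega
    haveI : FiniteDimensional ℝ
        ↥(((Hsub (n + 1)).prod ((Hsub (n + 1)).prod (Hsub (n + 1)))) ⊓
          LinearMap.ker (syzMap (X 0 ^ (2 * n + 1)) ((X 0 + X 1) ^ (2 * n + 1))
            (X 1 ^ (2 * n + 1)))) :=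
      Module.Finite.equiv (infKerEquiv _ _).symm
    rw [← Module.finrank_eq_rank]
    exact_mod_cast h3
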